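/- arXiv:1803.01948 — 3 statements merged into one kernel-verified Lean document; each statement's English description precedes it below -/
import Mathlib

section
/- Let G be a countable group acting by homeomorphisms on a compact metric space X, and suppose the action is expansive with expansivity constant ε (i.e., if d(T^g x, T^g y) ≤ ε for all g ∈ G then x = y). Then every (ε/2)-asymptotic pair is an asymptotic pair, i.e., A^{ε/2}(X,T) = A(X,T). -/
/-- `(x,y)` is a `δ`-asymptotic pair: `d(T^g x, T^g y) > δ` for only finitely many `g`. -/
def IsEpsAsymptoticPair {G X : Type*} [Group G] [MetricSpace X] [MulAction G X]
    (δ : ℝ) (x y : X) : Prop :=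
  {g : G | δ < dist (g • x) (g • y)}.Finite

/-- `(x,y)` is an asymptotic pair: it is `δ`-asymptotic for every `δ > 0`. -/
def IsAsymptoticPair {G X : Type*} [Group G] [MetricSpace X] [MulAction G X]
    (x y : X) : Prop :=
  ∀ δ : ℝ, 0 < δ → IsEpsAsymptoticPair (G := G) δ x y

theorem eps_asymptotic_eq_asymptotic_of_expansive {G X : Type*} [Group G] [Countable G]
    [MetricSpace X] [CompactSpace X] [MulAction G X]
    (hcont : ∀ g : G, Continuous fun x : X => g • x)
    (ε : ℝ) (hε : 0 < ε)
    (hexp : ∀ x y : X, (∀ g : G, dist (g • x) (g • y) ≤ ε) → x = y) :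
    {p : X × X | IsEpsAsymptoticPair (G := G) (ε / 2) p.1 p.2} =
      {p : X × X | IsAsymptoticPair (G := G) p.1 p.2} := by
  ext ⟨x, y⟩
  simp only [Set.mem_setOf_eq]
  constructor
  · intro h δ hδ
    by_contra hinf
    have hS : Set.Infinite {g : G | δ < dist (g • x) (g • y)} := hinf
    set e := hS.natEmbedding with he
    set gn : ℕ → G := fun n => (e n : G) with hgn
    have hgn_inj : Function.Injective gn := Subtype.val_injective.comp e.injective
    have hgn_prop : ∀ n, δ < dist (gn n • x) (gn n • y) := fun n => (e n).2
    obtain ⟨p, -, φ, hφ, hto⟩ :=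
      IsCompact.tendsto_subseq (isCompact_univ (X := X × X))
        (fun n => Set.mem_univ ((gn n • x, gn n • y) : X × X))
    have hx' : Filter.Tendsto (fun n => gn (φ n) • x) Filter.atTop (nhds p.1) :=
      (continuous_fst.tendsto p).comp hto
    have hy' : Filter.Tendsto (fun n => gn (φ n) • y) Filter.atTop (nhds p.2) :=
      (continuous_snd.tendsto p).comp hto
    have key : ∀ h0 : G, dist (h0 • p.1) (h0 • p.2) ≤ ε := by
      intro h0
      have hF : {n : ℕ | ε / 2 < dist ((h0 * gn (φ n)) • x) ((h0 * gn (φ n)) • y)}.Finite := by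
        have : {n : ℕ | ε / 2 < dist ((h0 * gn (φ n)) • x) ((h0 * gn (φ n)) • y)} =
            (fun n => h0 * gn (φ n)) ⁻¹' {g : G | ε / 2 < dist (g • x) (g • y)} := rfl
        rw [this]
        exact h.preimage
          ((mul_right_injective h0).comp (hgn_inj.comp hφ.injective)).injOn
      have hev : ∀ᶠ n in Filter.atTop,
          dist (h0 • (gn (φ n) • x)) (h0 • (gn (φ n) • y)) ≤ ε / 2 := by
        have := hF.eventually_cofinite_notMem
        rw [Nat.cofinite_eq_atTop] at this
        filter_upwards [this] with n hn
        simp only [Set.mem_setOf_eq, not_lt, ← mul_smul] at hn ⊢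
        exact hn
      have htend : Filter.Tendsto
          (fun n => dist (h0 • (gn (φ n) • x)) (h0 • (gn (φ n) • y)))
          Filter.atTop (nhds (dist (h0 • p.1) (h0 • p.2))) :=
        Filter.Tendsto.dist (((hcont h0).tendsto p.1).comp hx')
          (((hcont h0).tendsto p.2).comp hy')
      have := le_of_tendsto htend hev
      linarith
    have hpq : p.1 = p.2 := hexp _ _ key
    have hd : Filter.Tendsto (fun n => dist (gn (φ n) • x) (gn (φ n) • y))
        Filter.atTop (nhds (dist p.1 p.2)) := Filter.Tendsto.dist hx' hy'
    have hdd : δ ≤ dist p.1 p.2 :=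
      ge_of_tendsto' hd (fun n => (hgn_prop (φ n)).le)
    rw [hpq, dist_self] at hdd
    linarith
  · intro h
    exact h (ε / 2) (by positivity)
end

section
/- Let X ⊆ A^G be a subshift with bounded chain exchangeability with constant N. Then for every pair (x,y) ∈ X² there exist z⁰, z¹, ..., z^N ∈ X with z⁰ = x, z^N = y and (z^i, z^{i+1}) in the closure of the asymptotic relation for each i. In particular the smallest equivalence relation containing the closure of the asymptotic relation is all of X². -/
/-- The left shift action on `A^G`: `(σ^g x)_h = x_{g⁻¹ h}`. -/
def shift {G A : Type*} [Group G] (g : G) (x : G → A) : G → A :=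
  fun h => x (g⁻¹ * h)

/-- Patterns `p, q` over support `F` are exchangeable in `X`: there is an asymptotic pair
`(x,y) ∈ X²` with `x|_F = p` and `y|_F = q`. -/
def Exchangeable {G A : Type*} [Group G] (X : Set (G → A)) (F : Set G) (p q : G → A) : Prop :=
  ∃ x ∈ X, ∃ y ∈ X, {g : G | x g ≠ y g}.Finite ∧
    (∀ h ∈ F, x h = p h) ∧ (∀ h ∈ F, y h = q h)

/-- `X` has bounded chain exchangeability with constant `N`. -/
def BCE {G A : Type*} [Group G] (X : Set (G → A)) (N : ℕ) : Prop :=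
  ∀ F : Set G, F.Finite → ∀ a ∈ X, ∀ b ∈ X,
    ∃ r : Fin (N + 1) → G → A,
      (∀ i, ∃ x ∈ X, ∀ h ∈ F, x h = r i h) ∧
      (∀ h ∈ F, r 0 h = a h) ∧ (∀ h ∈ F, r (Fin.last N) h = b h) ∧
      ∀ i : Fin N, Exchangeable X F (r i.castSucc) (r i.succ)

open Filter Topology

theorem bce_implies_asymptotic_class_le_two {G A : Type*} [Group G] [Countable G]
    [Fintype A] [TopologicalSpace A] [DiscreteTopology A]
    (X : Set (G → A)) (hclosed : IsClosed X)
    (hinv : ∀ (g : G) (x : G → A), x ∈ X → shift g x ∈ X)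
    (N : ℕ) (hBCE : BCE X N) :
    (∀ x ∈ X, ∀ y ∈ X,
      ∃ z : Fin (N + 1) → G → A, z 0 = x ∧ z (Fin.last N) = y ∧ (∀ i, z i ∈ X) ∧
        ∀ i : Fin N, (z i.castSucc, z i.succ) ∈
          closure {p : (G → A) × (G → A) |
            p.1 ∈ X ∧ p.2 ∈ X ∧ {g : G | p.1 g ≠ p.2 g}.Finite}) ∧
    ∀ x ∈ X, ∀ y ∈ X,
      Relation.EqvGen (fun a b => (a, b) ∈
        closure {p : (G → A) × (G → A) |
          p.1 ∈ X ∧ p.2 ∈ X ∧ {g : G | p.1 g ≠ p.2 g}.Finite}) x y := by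
  set S := {p : (G → A) × (G → A) |
      p.1 ∈ X ∧ p.2 ∈ X ∧ {g : G | p.1 g ≠ p.2 g}.Finite} with hSdef
  have main : ∀ x ∈ X, ∀ y ∈ X,
      ∃ z : Fin (N + 1) → G → A, z 0 = x ∧ z (Fin.last N) = y ∧ (∀ i, z i ∈ X) ∧
        ∀ i : Fin N, (z i.castSucc, z i.succ) ∈ closure S := by
    intro x hx y hy
    haveI : Nonempty G := ⟨1⟩
    haveI : Nonempty A := ⟨x 1⟩
    -- exhaustion of G by finite sets
    obtain ⟨e, he⟩ := exists_surjective_nat G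
    set F : ℕ → Set G := fun n => e '' {m | m < n} with hF
    have hFfin : ∀ n, (F n).Finite := fun n => (Set.finite_Iio n).image e
    have hmem : ∀ g : G, ∀ᶠ n in cofinite, g ∈ F n := by
      intro g
      obtain ⟨m, rfl⟩ := he g
      rw [Nat.cofinite_eq_atTop, eventually_atTop]
      exact ⟨m + 1, fun n hn => ⟨m, hn, rfl⟩⟩
    -- chains for each finite stage
    have H := fun n : ℕ => hBCE (F n) (hFfin n) x hx y hy
    choose r hrX hr0 hrN hrE using H
    choose u huX v hvX hasym hu hv using fun n i => hrE n i
    rcases Nat.eq_zero_or_pos N with hN | hN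
    · -- degenerate case N = 0 : x = y
      subst hN
      have hxy : x = y := by
        funext g
        obtain ⟨r', -, h0, hN', -⟩ := hBCE {g} (Set.finite_singleton g) x hx y hy
        have e0 := h0 g rfl
        have e1 := hN' g rfl
        have : Fin.last 0 = 0 := rfl
        rw [this] at e1
        rw [← e0, e1]
      refine ⟨fun _ => x, rfl, ?_, fun _ => hx, fun i => i.elim0⟩
      exact hxy
    · -- main case N ≥ 1
      set U : Ultrafilter ℕ := Ultrafilter.of cofinite with hU
      have hUle : (U : Filter ℕ) ≤ cofinite := Ultrafilter.of_le cofinite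
      have key : ∀ w : ℕ → (G → A), ∃ L, Tendsto w (U : Filter ℕ) (𝓝 L) := by
        intro w
        refine ⟨(U.map w).lim, ?_⟩
        have := Ultrafilter.le_nhds_lim (U.map w)
        rwa [Ultrafilter.coe_map] at this
      choose a ha using fun i : Fin N => key (fun n => u n i)
      choose b hb using fun i : Fin N => key (fun n => v n i)
      -- uniqueness of limits given eventual agreement on the exhaustion
      have uniq : ∀ (w w' : ℕ → (G → A)) (L L' : G → A),
          Tendsto w (U : Filter ℕ) (𝓝 L) → Tendsto w' (U : Filter ℕ) (𝓝 L') →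
          (∀ n, ∀ h ∈ F n, w n h = w' n h) → L = L' := by
        intro w w' L L' hw hw' hagree
        funext g
        have h1 : Tendsto (fun n => w n g) (U : Filter ℕ) (𝓝 (L g)) :=
          ((continuous_apply g).tendsto L).comp hw
        have h2 : Tendsto (fun n => w' n g) (U : Filter ℕ) (𝓝 (L' g)) :=
          ((continuous_apply g).tendsto L').comp hw'
        have heq : (fun n => w n g) =ᶠ[(U : Filter ℕ)] (fun n => w' n g) :=
          ((hmem g).filter_mono hUle).mono fun n hn => hagree n g hn
        exact tendsto_nhds_unique (h1.congr' heq) h2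
      set i0 : Fin N := ⟨0, hN⟩ with hi0
      have a0x : a i0 = x := by
        refine uniq _ (fun _ => x) _ _ (ha i0) tendsto_const_nhds ?_
        intro n h hh
        have h1 := hu n i0 h hh
        have h2 := hr0 n h hh
        have : (i0 : Fin N).castSucc = 0 := by
          apply Fin.ext; simp [hi0]
        rw [this] at h1
        rw [h1, h2]
      have blast : ∀ i : Fin N, i.succ = Fin.last N → b i = y := by
        intro i hi
        refine uniq _ (fun _ => y) _ _ (hb i) tendsto_const_nhds ?_
        intro n h hh
        have h1 := hv n i h hh
        rw [hi] at h1
        rw [h1, hrN n h hh]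
      have bsucc : ∀ (i : Fin N) (h : i.succ ≠ Fin.last N),
          b i = a (i.succ.castPred h) := by
        intro i h
        refine uniq _ _ _ _ (hb i) (ha (i.succ.castPred h)) ?_
        intro n g hg
        have h1 := hv n i g hg
        have h2 := hu n (i.succ.castPred h) g hg
        rw [Fin.castSucc_castPred] at h2
        rw [h1, h2]
      -- the chain
      classical
      set z : Fin (N + 1) → G → A :=
        fun j => if h : j = Fin.last N then y else a (j.castPred h) with hzdef
      have hz : ∀ j, z j = if h : j = Fin.last N then y else a (j.castPred h) :=
        fun j => rfl
      refine ⟨z, ?_, ?_, ?_, ?_⟩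
      · have h0 : (0 : Fin (N + 1)) ≠ Fin.last N := by
          simp only [ne_eq, Fin.ext_iff, Fin.val_zero, Fin.val_last]
          omega
        rw [hz, dif_neg h0]
        have : (0 : Fin (N + 1)).castPred h0 = i0 := by
          apply Fin.ext; simp [hi0]
        rw [this, a0x]
      · rw [hz, dif_pos rfl]
      · intro j
        by_cases h : j = Fin.last N
        · rw [hz, dif_pos h]; exact hy
        · rw [hz, dif_neg h]
          exact hclosed.mem_of_tendsto (ha (j.castPred h))
            (Eventually.of_forall fun n => huX n _)
      · intro i
        have hcs : i.castSucc ≠ Fin.last N := (Fin.castSucc_lt_last i).ne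
        have e1 : (if h : i.castSucc = Fin.last N then y else a (i.castSucc.castPred h)) = a i := by
          rw [dif_neg hcs, Fin.castPred_castSucc]
        have e2 : (if h : i.succ = Fin.last N then y else a (i.succ.castPred h)) = b i := by
          by_cases h : i.succ = Fin.last N
          · rw [dif_pos h, blast i h]
          · rw [dif_neg h, ← bsucc i h]
        rw [hz, hz, e1, e2]
        exact mem_closure_of_tendsto ((ha i).prodMk_nhds (hb i))
          (Eventually.of_forall fun n => ⟨huX n i, hvX n i, hasym n i⟩)
  refine ⟨main, ?_⟩
  intro x hx y hy
  obtain ⟨z, hz0, hzN, -, hchain⟩ := main x hx y hy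
  have step : ∀ j : Fin (N + 1), Relation.EqvGen
      (fun a b => (a, b) ∈ closure S) x (z j) := by
    intro j
    induction j using Fin.induction with
    | zero => rw [hz0]; exact Relation.EqvGen.refl x
    | succ i ih =>
        exact Relation.EqvGen.trans _ _ _ ih (Relation.EqvGen.rel _ _ (hchain i))
  have := step (Fin.last N)
  rwa [hzN] at this
end

section
/- Let X ⊆ A^G be a topologically weakly mixing subshift. If the smallest equivalence relation generated by the closure of the asymptotic relation equals X² (i.e., X has asymptotic class at most 2), then X has bounded chain exchangeability. -/
open Set Topology

set_option linter.unusedSectionVars false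

section Aux

variable {G A : Type*} [Group G] [TopologicalSpace A] [DiscreteTopology A]

lemma shift_shift_cancel (g : G) (x : G → A) : shift g⁻¹ (shift g x) = x := by
  funext h
  simp [shift, ← mul_assoc]

lemma continuous_shift (g : G) : Continuous (shift (A := A) g) :=
  continuous_pi fun _ => continuous_apply _

lemma isOpen_cyl {F : Set G} (hF : F.Finite) (a : G → A) :
    IsOpen {x : G → A | ∀ h ∈ F, x h = a h} := by
  have : {x : G → A | ∀ h ∈ F, x h = a h} = ⋂ h ∈ F, {x : G → A | x h = a h} := by
    ext x; simp
  rw [this]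
  refine hF.isOpen_biInter fun h _ => ?_
  have : IsOpen ((fun x : G → A => x h) ⁻¹' {a h}) :=
    (isOpen_discrete ({a h} : Set A)).preimage (continuous_apply h)
  exact this

end Aux

theorem weakly_mixing_class_two_implies_bce {G A : Type*} [Group G] [Countable G]
    [Fintype A] [TopologicalSpace A] [DiscreteTopology A]
    (X : Set (G → A)) (hclosed : IsClosed X)
    (hinv : ∀ (g : G) (x : G → A), x ∈ X → shift g x ∈ X)
    -- topological weak mixing: the product system is topologically transitive
    (hwm : ∀ U V : Set ((G → A) × (G → A)), IsOpen U → IsOpen V →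
      (U ∩ X ×ˢ X).Nonempty → (V ∩ X ×ˢ X).Nonempty →
      ∃ g : G, ((fun p : (G → A) × (G → A) => (shift g p.1, shift g p.2)) ''
          (U ∩ X ×ˢ X) ∩ (V ∩ X ×ˢ X)).Nonempty)
    -- asymptotic class at most 2: (closure A(X,σ))⁺ = X²
    (hclass : ∀ x ∈ X, ∀ y ∈ X,
      Relation.EqvGen (fun a b => (a, b) ∈
        closure {p : (G → A) × (G → A) |
          p.1 ∈ X ∧ p.2 ∈ X ∧ {g : G | p.1 g ≠ p.2 g}.Finite}) x y) :
    ∃ N : ℕ, BCE X N := by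
  classical
  by_cases hX : X.Nonempty
  swap
  · refine ⟨0, fun F _ a ha b _ => absurd ha ?_⟩
    simp [Set.not_nonempty_iff_eq_empty.mp hX]
  -- the asymptotic relation and its closure
  set Asy : Set ((G → A) × (G → A)) :=
    {p : (G → A) × (G → A) | p.1 ∈ X ∧ p.2 ∈ X ∧ {g : G | p.1 g ≠ p.2 g}.Finite} with hAsy
  set S : Set ((G → A) × (G → A)) := closure Asy with hSdef
  have hSsub : S ⊆ X ×ˢ X :=
    closure_minimal (fun p hp => ⟨hp.1, hp.2.1⟩) (hclosed.prod hclosed)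
  have hdiag : ∀ x ∈ X, (x, x) ∈ S := fun x hx =>
    subset_closure ⟨hx, hx, by simp⟩
  have hSsymm : ∀ {u v : G → A}, (u, v) ∈ S → (v, u) ∈ S := by
    intro u v huv
    have h1 : Prod.swap '' S ⊆ closure (Prod.swap '' Asy) :=
      image_closure_subset_closure_image continuous_swap
    have h2 : Prod.swap '' Asy ⊆ Asy := by
      rintro p ⟨⟨x, y⟩, ⟨hx, hy, hf⟩, rfl⟩
      exact ⟨hy, hx, hf.subset fun g hg h => hg h.symm⟩
    exact closure_mono h2 (h1 ⟨(u, v), huv, rfl⟩)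
  have hΦcont : ∀ g : G,
      Continuous (fun p : (G → A) × (G → A) => (shift g p.1, shift g p.2)) :=
    fun g => ((continuous_shift g).comp continuous_fst).prodMk
      ((continuous_shift g).comp continuous_snd)
  have hSInv : ∀ (g : G) (p : (G → A) × (G → A)), p ∈ S →
      (shift g p.1, shift g p.2) ∈ S := by
    intro g p hp
    have h1 : (fun p : (G → A) × (G → A) => (shift g p.1, shift g p.2)) '' S ⊆
        closure ((fun p : (G → A) × (G → A) => (shift g p.1, shift g p.2)) '' Asy) :=
      image_closure_subset_closure_image (hΦcont g)
    have h2 : (fun p : (G → A) × (G → A) => (shift g p.1, shift g p.2)) '' Asy ⊆ Asy := by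
      rintro q ⟨⟨x, y⟩, ⟨hx, hy, hf⟩, rfl⟩
      refine ⟨hinv g x hx, hinv g y hy, (hf.image (fun h => g * h)).subset ?_⟩
      intro h hh
      exact ⟨g⁻¹ * h, hh, by group⟩
    exact closure_mono h2 (h1 ⟨p, hp, rfl⟩)
  -- chains of length n in S
  set R : ℕ → Set ((G → A) × (G → A)) := fun n =>
    {p | ∃ z : ℕ → G → A, z 0 = p.1 ∧ z n = p.2 ∧ (∀ i, z i ∈ X) ∧
      ∀ i < n, (z i, z (i + 1)) ∈ S} with hRdef
  have hRclosed : ∀ n, IsClosed (R n) := by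
    intro n
    have heq : R n = (fun z : ℕ → G → A => (z 0, z n)) ''
        ((⋂ i : ℕ, {z : ℕ → G → A | z i ∈ X}) ∩
          ⋂ i ∈ Finset.range n, {z : ℕ → G → A | (z i, z (i + 1)) ∈ S}) := by
      ext p
      constructor
      · rintro ⟨z, h0, hn, hXz, hst⟩
        refine ⟨z, ⟨?_, ?_⟩, by dsimp only; rw [h0, hn]⟩
        · simp only [mem_iInter, mem_setOf_eq]; exact hXz
        · simp only [mem_iInter, mem_setOf_eq]
          exact fun i hi => hst i (Finset.mem_range.mp hi)
      · rintro ⟨z, ⟨hXz, hst⟩, hz⟩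
        simp only [mem_iInter, mem_setOf_eq] at hXz hst
        exact ⟨z, congrArg Prod.fst hz, congrArg Prod.snd hz, hXz,
          fun i hi => hst i (Finset.mem_range.mpr hi)⟩
    rw [heq]
    have hC : IsClosed ((⋂ i : ℕ, {z : ℕ → G → A | z i ∈ X}) ∩
        ⋂ i ∈ Finset.range n, {z : ℕ → G → A | (z i, z (i + 1)) ∈ S}) := by
      refine IsClosed.inter (isClosed_iInter fun i => hclosed.preimage (continuous_apply i)) ?_
      exact isClosed_biInter fun i _ => (isClosed_closure).preimage
        (((continuous_apply i)).prodMk (continuous_apply (i + 1)))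
    exact (hC.isCompact.image ((continuous_apply 0).prodMk (continuous_apply n))).isClosed
  have hRsub : ∀ n, R n ⊆ X ×ˢ X := by
    rintro n p ⟨z, h0, hn, hXz, -⟩
    exact ⟨h0 ▸ hXz 0, hn ▸ hXz n⟩
  have hRinv : ∀ (n : ℕ) (g : G) (p : (G → A) × (G → A)), p ∈ R n →
      (shift g p.1, shift g p.2) ∈ R n := by
    rintro n g p ⟨z, h0, hn, hXz, hst⟩
    exact ⟨fun i => shift g (z i), by dsimp only; rw [h0], by dsimp only; rw [hn],
      fun i => hinv g _ (hXz i), fun i hi => hSInv g _ (hst i hi)⟩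
  -- chains cover X × X
  have hcover : ∀ a ∈ X, ∀ b ∈ X, ∃ n, (a, b) ∈ R n := by
    intro a ha b hb
    have key : ∀ x y : G → A,
        Relation.EqvGen (fun a b => (a, b) ∈ S) x y →
        (x ∈ X ↔ y ∈ X) ∧ (x ∈ X → ∃ n, (x, y) ∈ R n) := by
      intro x y hxy
      induction hxy with
      | rel x y h =>
        have hx := (hSsub h).1
        have hy := (hSsub h).2
        refine ⟨by simp [hx, hy], fun _ => ⟨1, fun j => if j = 0 then x else y,
          by simp, by simp, ?_, ?_⟩⟩
        · intro i
          by_cases hi : i = 0 <;> simp [hi, hx, hy]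
        · intro i hi
          interval_cases i
          simpa using h
      | refl x =>
        exact ⟨Iff.rfl, fun hx => ⟨0, fun _ => x, rfl, rfl, fun _ => hx, by omega⟩⟩
      | symm x y h ih =>
        refine ⟨ih.1.symm, fun hy => ?_⟩
        obtain ⟨n, z, h0, hn, hXz, hst⟩ := ih.2 (ih.1.mpr hy)
        refine ⟨n, fun j => z (n - j), by simpa using hn, by simpa using h0,
          fun i => hXz _, ?_⟩
        intro i hi
        have hstep := hst (n - i - 1) (by omega)
        have e1 : n - i - 1 + 1 = n - i := by omega
        have e2 : n - (i + 1) = n - i - 1 := by omega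
        rw [e1] at hstep
        show (z (n - i), z (n - (i + 1))) ∈ S
        rw [e2]
        exact hSsymm hstep
      | trans x y w h1 h2 ih1 ih2 =>
        refine ⟨ih1.1.trans ih2.1, fun hx => ?_⟩
        obtain ⟨n, z, hz0, hzn, hXz, hzst⟩ := ih1.2 hx
        obtain ⟨m, u, hu0, hum, hXu, hust⟩ := ih2.2 (ih1.1.mp hx)
        have hyz : z n = u 0 := by rw [hzn, hu0]
        refine ⟨n + m, fun j => if j ≤ n then z j else u (j - n), ?_, ?_, ?_, ?_⟩
        · show (if 0 ≤ n then z 0 else u (0 - n)) = (x, w).1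
          rw [if_pos (Nat.zero_le n)]
          exact hz0
        · show (if n + m ≤ n then z (n + m) else u (n + m - n)) = (x, w).2
          by_cases hm : m = 0
          · subst hm
            rw [if_pos (by omega)]
            exact hzn.trans (hu0.symm.trans hum)
          · rw [if_neg (by omega)]
            have e : n + m - n = m := by omega
            rw [e]
            exact hum
        · intro j
          show (if j ≤ n then z j else u (j - n)) ∈ X
          by_cases hj : j ≤ n
          · rw [if_pos hj]; exact hXz j
          · rw [if_neg hj]; exact hXu _
        · intro i hi
          show ((if i ≤ n then z i else u (i - n)),
            (if i + 1 ≤ n then z (i + 1) else u (i + 1 - n))) ∈ S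
          rcases lt_trichotomy i n with h | h | h
          · rw [if_pos h.le, if_pos (by omega)]
            exact hzst i h
          · rw [if_pos h.le, if_neg (by omega)]
            have e : i + 1 - n = 1 := by omega
            rw [e]
            have hz : z i = u 0 := by rw [h]; exact hyz
            rw [hz]
            exact hust 0 (by omega)
          · rw [if_neg (by omega), if_neg (by omega)]
            have e : i + 1 - n = (i - n) + 1 := by omega
            rw [e]
            exact hust (i - n) (by omega)
    have h := hclass a ha b hb
    exact (key a b h).2 ha
  -- Baire category on the compact space X × X
  obtain ⟨x₀, hx₀⟩ := hX
  set K : Set ((G → A) × (G → A)) := X ×ˢ X with hKdef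
  have hKclosed : IsClosed K := hclosed.prod hclosed
  haveI : CompactSpace K := isCompact_iff_compactSpace.mp hKclosed.isCompact
  haveI : T2Space K := inferInstance
  haveI : LocallyCompactSpace K := inferInstance
  haveI : Nonempty K := ⟨⟨(x₀, x₀), ⟨hx₀, hx₀⟩⟩⟩
  have hcov : (⋃ n, ((Subtype.val ⁻¹' R n) : Set K)) = univ := by
    ext p
    simp only [mem_iUnion, mem_univ, iff_true, mem_preimage]
    obtain ⟨n, hn⟩ := hcover (p : (G → A) × (G → A)).1 p.2.1
      (p : (G → A) × (G → A)).2 p.2.2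
    exact ⟨n, hn⟩
  obtain ⟨N, hNne⟩ := nonempty_interior_of_iUnion_of_closed
    (f := fun n => ((Subtype.val ⁻¹' R n) : Set K))
    (fun n => (hRclosed n).preimage continuous_subtype_val) hcov
  obtain ⟨q, hq⟩ := hNne
  obtain ⟨U, hUopen, hUeq⟩ := isOpen_induced_iff.mp
    (isOpen_interior (s := ((Subtype.val ⁻¹' R N) : Set K)))
  have hqU : (q : (G → A) × (G → A)) ∈ U := by
    have : q ∈ Subtype.val ⁻¹' U := by rw [hUeq]; exact hq
    exact this
  have hUsub : ∀ p : (G → A) × (G → A), p ∈ U → p ∈ K → p ∈ R N := by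
    intro p hpU hpK
    have h1 : (⟨p, hpK⟩ : K) ∈ Subtype.val ⁻¹' U := hpU
    rw [hUeq] at h1
    have h2 : (⟨p, hpK⟩ : K) ∈ Subtype.val ⁻¹' R N :=
      interior_subset (s := (Subtype.val ⁻¹' R N : Set K)) h1
    exact h2
  -- establish BCE with constant N
  refine ⟨N, ?_⟩
  intro F hF a ha b hb
  set V : Set ((G → A) × (G → A)) :=
    {p | (∀ h ∈ F, p.1 h = a h) ∧ (∀ h ∈ F, p.2 h = b h)} with hVdef
  have hVopen : IsOpen V := by
    have h1 : IsOpen {p : (G → A) × (G → A) | ∀ h ∈ F, p.1 h = a h} :=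
      (isOpen_cyl hF a).preimage continuous_fst
    have h2 : IsOpen {p : (G → A) × (G → A) | ∀ h ∈ F, p.2 h = b h} :=
      (isOpen_cyl hF b).preimage continuous_snd
    exact h1.inter h2
  obtain ⟨g, q', hq'⟩ := hwm V U hVopen hUopen
    ⟨(a, b), ⟨fun _ _ => rfl, fun _ _ => rfl⟩, ha, hb⟩
    ⟨q, hqU, q.2⟩
  obtain ⟨⟨⟨x, y⟩, ⟨⟨hxa, hyb⟩, hxX, hyX⟩, rfl⟩, hq'U, hq'K⟩ := hq'
  have hshift : (shift g x, shift g y) ∈ R N := hUsub _ hq'U hq'K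
  have hxy : (x, y) ∈ R N := by
    have := hRinv N g⁻¹ _ hshift
    simpa [shift_shift_cancel] using this
  obtain ⟨z, hz0, hzN, hXz, hzst⟩ := hxy
  refine ⟨fun i => z i.val, ?_, ?_, ?_, ?_⟩
  · exact fun i => ⟨z i.val, hXz _, fun h _ => rfl⟩
  · intro h hh
    show z ((0 : Fin (N + 1)) : ℕ) h = a h
    rw [Fin.val_zero, hz0]
    exact hxa h hh
  · intro h hh
    show z ((Fin.last N : Fin (N + 1)) : ℕ) h = b h
    rw [Fin.val_last, hzN]
    exact hyb h hh
  · intro i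
    have hstep : (z i.val, z (i.val + 1)) ∈ S := hzst i.val i.isLt
    have hW : IsOpen {p : (G → A) × (G → A) |
        (∀ h ∈ F, p.1 h = z i.val h) ∧ (∀ h ∈ F, p.2 h = z (i.val + 1) h)} := by
      have h1 : IsOpen {p : (G → A) × (G → A) | ∀ h ∈ F, p.1 h = z i.val h} :=
        (isOpen_cyl hF _).preimage continuous_fst
      have h2 : IsOpen {p : (G → A) × (G → A) | ∀ h ∈ F, p.2 h = z (i.val + 1) h} :=
        (isOpen_cyl hF _).preimage continuous_snd
      exact h1.inter h2
    obtain ⟨⟨u, v⟩, ⟨hu, hv⟩, huX, hvX, hfin⟩ :=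
      mem_closure_iff.mp hstep _ hW ⟨fun _ _ => rfl, fun _ _ => rfl⟩
    exact ⟨u, huX, v, hvX, hfin, fun h hh => hu h hh, fun h hh => hv h hh⟩
end
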